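/- Let b be a daughter distribution function and let y > 0 be such that b(x,y) = 0 for a.e. x > y and ∫₀^y x·b(x,y) dx = y. Then: (i) n_1(y) = y, i.e. N_1(y) = 0; (ii) for every m > 1, n_m(y) < y^m, i.e. N_m(y) > 0; (iii) for every 0 ≤ m < 1, n_m(y) > y^m as a value in [0,∞], i.e. N_m(y) < 0. -/

import Mathlib

open MeasureTheory Set Filter
open scoped ENNReal

/-- `n_m(y) = ∫₀^y x^m b(x,y) dx`. -/
noncomputable def nmom (b : ℝ → ℝ → ℝ) (m y : ℝ) : ℝ :=
  ∫ x in Set.Ioo 0 y, x ^ m * b x y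

/-- `N_m(y) = y^m − n_m(y)`. -/
noncomputable def Nmom (b : ℝ → ℝ → ℝ) (m y : ℝ) : ℝ :=
  y ^ m - nmom b m y

/-- (i) `N_1(y) = 0`; (ii) `N_m(y) > 0` for `m > 1`;
(iii) `n_m(y) > y^m` as a value in `[0,∞]` for `0 ≤ m < 1`. -/
theorem stmt4 (b : ℝ → ℝ → ℝ) (y : ℝ) (hy : 0 < y)
    (hb_meas : Measurable (Function.uncurry b))
    (hb_nonneg : ∀ x y, 0 ≤ b x y)
    (hb_supp : ∀ᵐ x ∂(volume : Measure ℝ), y < x → b x y = 0)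
    (hb_mass : ∫ x in Set.Ioo 0 y, x * b x y = y) :
    Nmom b 1 y = 0 ∧
    (∀ m : ℝ, 1 < m → 0 < Nmom b m y) ∧
    (∀ m : ℝ, 0 ≤ m → m < 1 →
      ENNReal.ofReal (y ^ m) <
        ∫⁻ x in Set.Ioo 0 y, ENNReal.ofReal (x ^ m * b x y)) := by
  set μ := (volume : Measure ℝ).restrict (Set.Ioo 0 y) with hμdef
  have hbm : Measurable (fun x => b x y) :=
    hb_meas.comp (measurable_id.prodMk measurable_const)
  have hInt : IntegrableOn (fun x => x * b x y) (Set.Ioo 0 y) := by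
    by_contra h
    rw [MeasureTheory.integral_undef h] at hb_mass
    linarith
  -- the set where `b · y ≠ 0` has positive measure in `Ioo 0 y`
  have hsupp : 0 < μ (Function.support fun x => b x y) := by
    by_contra h
    push_neg at h
    have h0 : μ (Function.support fun x => b x y) = 0 := le_antisymm h zero_le
    have hae : (fun x => x * b x y) =ᵐ[μ] 0 := by
      refine measure_mono_null ?_ h0
      intro x hx
      simp only [Function.mem_support, Pi.zero_apply] at *
      intro hb0
      exact hx (by simp [hb0])
    rw [integral_congr_ae hae] at hb_mass
    simp at hb_mass
    linarith
  refine ⟨?_, ?_, ?_⟩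
  · -- (i)
    simp [Nmom, nmom, Real.rpow_one, hb_mass]
    exact sub_eq_zero.mpr hb_mass.symm
  · -- (ii)
    intro m hm
    set f : ℝ → ℝ := fun x => x ^ m * b x y with hfdef
    set g : ℝ → ℝ := fun x => y ^ (m - 1) * (x * b x y) with hgdef
    have hg : Integrable g μ := hInt.const_mul _
    have hfm : Measurable f :=
      (measurable_id.pow_const m).mul hbm
    have hfg : ∀ᵐ x ∂μ, f x ≤ g x := by
      filter_upwards [ae_restrict_mem measurableSet_Ioo] with x hx
      have hx0 : 0 < x := hx.1
      have hpow : x ^ m = x ^ (m - 1) * x := by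
        rw [← Real.rpow_add_one hx0.ne']; ring_nf
      have hle : x ^ (m - 1) ≤ y ^ (m - 1) :=
        Real.rpow_le_rpow hx0.le hx.2.le (by linarith)
      have hb0 := hb_nonneg x y
      show x ^ m * b x y ≤ y ^ (m - 1) * (x * b x y)
      rw [hpow, ← mul_assoc]
      exact mul_le_mul_of_nonneg_right
        (mul_le_mul_of_nonneg_right hle hx0.le) hb0
    have hfnn : ∀ᵐ x ∂μ, 0 ≤ f x := by
      filter_upwards [ae_restrict_mem measurableSet_Ioo] with x hx
      exact mul_nonneg (Real.rpow_nonneg hx.1.le m) (hb_nonneg x y)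
    have hf : Integrable f μ := by
      refine Integrable.mono' hg hfm.aestronglyMeasurable ?_
      filter_upwards [hfg, hfnn] with x h1 h2
      rwa [Real.norm_eq_abs, abs_of_nonneg h2]
    have hpos : 0 < ∫ x, (g x - f x) ∂μ := by
      have : (0 : ℝ → ℝ) ≤ᵐ[μ] fun x => g x - f x := by
        filter_upwards [hfg] with x h; simpa using h
      rw [integral_pos_iff_support_of_nonneg_ae this (hg.sub hf)]
      refine lt_of_lt_of_le hsupp (measure_mono_ae ?_)
      filter_upwards [ae_restrict_mem measurableSet_Ioo] with x hx hxs
      have hx0 : 0 < x := hx.1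
      have hb0 : 0 < b x y := lt_of_le_of_ne (hb_nonneg x y) (Ne.symm hxs)
      have hlt : x ^ (m - 1) < y ^ (m - 1) :=
        Real.rpow_lt_rpow hx0.le hx.2 (by linarith)
      have hpow : x ^ m = x ^ (m - 1) * x := by
        rw [← Real.rpow_add_one hx0.ne']; ring_nf
      have hflt : f x < g x := by
        show x ^ m * b x y < y ^ (m - 1) * (x * b x y)
        rw [hpow, ← mul_assoc]
        exact mul_lt_mul_of_pos_right (mul_lt_mul_of_pos_right hlt hx0) hb0
      show x ∈ Function.support fun x => g x - f x
      simp only [Function.mem_support]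
      intro hcon
      linarith
    have hgi : ∫ x, g x ∂μ = y ^ m := by
      rw [hgdef]
      rw [MeasureTheory.integral_const_mul, hb_mass, ← Real.rpow_add_one hy.ne']
      ring_nf
    have hsub : ∫ x, (g x - f x) ∂μ = (∫ x, g x ∂μ) - ∫ x, f x ∂μ :=
      integral_sub hg hf
    have hfeq : nmom b m y = ∫ x, f x ∂μ := by
      simp only [nmom, hμdef, hfdef]
    simp only [Nmom, hfeq]
    linarith
  · -- (iii)
    intro m hm0 hm1
    set F : ℝ → ℝ≥0∞ := fun x => ENNReal.ofReal (x ^ m * b x y) with hFdef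
    set G : ℝ → ℝ≥0∞ := fun x => ENNReal.ofReal (y ^ (m - 1) * (x * b x y)) with hGdef
    have hym : (0:ℝ) ≤ y ^ (m - 1) := Real.rpow_nonneg hy.le _
    have hFm : Measurable F := ((measurable_id.pow_const m).mul hbm).ennreal_ofReal
    have hGm : Measurable G := ((measurable_id.mul hbm).const_mul _).ennreal_ofReal
    have hGint : ∫⁻ x, G x ∂μ = ENNReal.ofReal (y ^ m) := by
      have hnn : 0 ≤ᵐ[μ] fun x => x * b x y := by
        filter_upwards [ae_restrict_mem measurableSet_Ioo] with x hx
        exact mul_nonneg hx.1.le (hb_nonneg x y)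
      have h1 : ∫⁻ x, ENNReal.ofReal (x * b x y) ∂μ = ENNReal.ofReal y := by
        rw [← MeasureTheory.ofReal_integral_eq_lintegral_ofReal hInt hnn]
        exact congrArg ENNReal.ofReal hb_mass
      calc ∫⁻ x, G x ∂μ
          = ∫⁻ x, ENNReal.ofReal (y ^ (m-1)) * ENNReal.ofReal (x * b x y) ∂μ :=
            lintegral_congr fun x => ENNReal.ofReal_mul hym
        _ = ENNReal.ofReal (y ^ (m-1)) * ∫⁻ x, ENNReal.ofReal (x * b x y) ∂μ :=
            lintegral_const_mul _ ((measurable_id.mul hbm).ennreal_ofReal)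
        _ = ENNReal.ofReal (y ^ (m-1)) * ENNReal.ofReal y := by rw [h1]
        _ = ENNReal.ofReal (y ^ (m-1) * y) := (ENNReal.ofReal_mul hym).symm
        _ = ENNReal.ofReal (y ^ m) := by rw [← Real.rpow_add_one hy.ne']; ring_nf
    have hGF : G ≤ᵐ[μ] F := by
      filter_upwards [ae_restrict_mem measurableSet_Ioo] with x hx
      have hx0 : 0 < x := hx.1
      have hle : y ^ (m - 1) ≤ x ^ (m - 1) :=
        (Real.rpow_lt_rpow_of_neg hx0 hx.2 (by linarith)).le
      have hpow : x ^ m = x ^ (m - 1) * x := by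
        rw [← Real.rpow_add_one hx0.ne']; ring_nf
      apply ENNReal.ofReal_le_ofReal
      rw [hpow, ← mul_assoc]
      exact mul_le_mul_of_nonneg_right
        (mul_le_mul_of_nonneg_right hle hx0.le) (hb_nonneg x y)
    have hsubpos : 0 < ∫⁻ x, (F x - G x) ∂μ := by
      show 0 < ∫⁻ x, (F - G) x ∂μ
      rw [lintegral_pos_iff_support (hFm.sub hGm)]
      refine lt_of_lt_of_le hsupp (measure_mono_ae ?_)
      filter_upwards [ae_restrict_mem measurableSet_Ioo] with x hx hxs
      have hx0 : 0 < x := hx.1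
      have hb0 : 0 < b x y := lt_of_le_of_ne (hb_nonneg x y) (Ne.symm hxs)
      have hlt : y ^ (m - 1) < x ^ (m - 1) :=
        Real.rpow_lt_rpow_of_neg hx0 hx.2 (by linarith)
      have hpow : x ^ m = x ^ (m - 1) * x := by
        rw [← Real.rpow_add_one hx0.ne']; ring_nf
      have hltr : y ^ (m-1) * (x * b x y) < x ^ m * b x y := by
        rw [hpow, ← mul_assoc]
        exact mul_lt_mul_of_pos_right (mul_lt_mul_of_pos_right hlt hx0) hb0
      have hGFx : G x < F x := by
        show ENNReal.ofReal _ < ENNReal.ofReal _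
        exact (ENNReal.ofReal_lt_ofReal_iff
          (mul_pos (Real.rpow_pos_of_pos hx0 m) hb0)).mpr hltr
      show x ∈ Function.support fun x => F x - G x
      simp only [Function.mem_support]
      exact (tsub_pos_iff_lt.mpr hGFx).ne'
    have hGfin : ∫⁻ x, G x ∂μ ≠ ⊤ := by rw [hGint]; exact ENNReal.ofReal_ne_top
    have hsub : ∫⁻ x, (F x - G x) ∂μ = (∫⁻ x, F x ∂μ) - ∫⁻ x, G x ∂μ :=
      lintegral_sub hGm hGfin hGF
    rw [hsub] at hsubpos
    have hfin : ∫⁻ x, G x ∂μ < ∫⁻ x, F x ∂μ := tsub_pos_iff_lt.mp hsubpos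
    rw [hGint] at hfin
    exact hfin
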